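/- Let A = ![![0, k_g, -ε k_n], ![k_g, 0, ε τ_g], ![k_n, τ_g, 0]] with ε = ±1, and suppose μ = k_g² − ε k_n² + ε τ_g² ≥ 0 and A ≠ 0. Then exp(ωA) ≠ I for every ω > 0. -/

import Mathlib

open Matrix

private lemma exp_nilp3 {B : Matrix (Fin 3) (Fin 3) ℝ} (h : B ^ 3 = 0) :
    NormedSpace.exp B = 1 + B + (2⁻¹ : ℝ) • B ^ 2 := by
  simp only [NormedSpace.exp_eq_tsum ℝ]
  rw [tsum_eq_sum (s := Finset.range 3) (fun n hn => by
    have h3 : 3 ≤ n := by simpa using hn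
    obtain ⟨k, rfl⟩ := Nat.exists_eq_add_of_le h3
    rw [pow_add, h, zero_mul, smul_zero])]
  norm_num [Finset.sum_range_succ]

private lemma exp_mulVec_eigen {B : Matrix (Fin 3) (Fin 3) ℝ} {w : Fin 3 → ℝ} {c : ℝ}
    (h : B.mulVec w = c • w) :
    (NormedSpace.exp B).mulVec w = Real.exp c • w := by
  letI : SeminormedRing (Matrix (Fin 3) (Fin 3) ℝ) := Matrix.linftyOpSemiNormedRing
  letI : NormedRing (Matrix (Fin 3) (Fin 3) ℝ) := Matrix.linftyOpNormedRing
  letI : NormedAlgebra ℝ (Matrix (Fin 3) (Fin 3) ℝ) := Matrix.linftyOpNormedAlgebra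
  have hpow : ∀ n : ℕ, (B ^ n).mulVec w = (c ^ n) • w := by
    intro n
    induction n with
    | zero => simp [Matrix.one_mulVec]
    | succ n ih =>
      rw [pow_succ, ← Matrix.mulVec_mulVec, h, Matrix.mulVec_smul, ih, smul_smul, pow_succ]
      ring_nf
  let φ : Matrix (Fin 3) (Fin 3) ℝ →L[ℝ] (Fin 3 → ℝ) :=
    LinearMap.toContinuousLinearMap
      { toFun := fun M => M.mulVec w
        map_add' := fun M N => Matrix.add_mulVec M N w
        map_smul' := fun r M => Matrix.smul_mulVec r M w }
  have hφ : ∀ M, φ M = M.mulVec w := fun _ => rfl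
  have hs := NormedSpace.expSeries_summable' (𝕂 := ℝ) B
  rw [← hφ (NormedSpace.exp B)]
  simp only [NormedSpace.exp_eq_tsum ℝ]
  rw [φ.map_tsum hs]
  have h1 : ∀ n : ℕ, φ (((n.factorial : ℝ))⁻¹ • B ^ n) = ((n.factorial : ℝ)⁻¹ • c ^ n) • w := by
    intro n
    rw [hφ, Matrix.smul_mulVec, hpow, smul_smul, smul_eq_mul]
  simp_rw [h1]
  rw [Summable.tsum_smul_const (NormedSpace.expSeries_summable' (𝕂 := ℝ) c)]
  congr 1
  rw [Real.exp_eq_exp_ℝ]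
  simp only [NormedSpace.exp_eq_tsum ℝ]

/-- If `μ = k_g² − ε k_n² + ε τ_g² ≥ 0` and the Darboux matrix `A` is nonzero, then
`exp(ωA) ≠ I` for every `ω > 0`; so a closed curve requires `μ < 0`. -/
theorem stmt_17 (kg kn τg ε : ℝ) (hε : ε = 1 ∨ ε = -1)
    (A : Matrix (Fin 3) (Fin 3) ℝ)
    (hA : A = !![0, kg, -ε * kn; kg, 0, ε * τg; kn, τg, 0])
    (hμ : 0 ≤ kg ^ 2 - ε * kn ^ 2 + ε * τg ^ 2)
    (hAne : A ≠ 0) :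
    ∀ ω : ℝ, 0 < ω → NormedSpace.exp (ω • A) ≠ 1 := by
  intro ω hω hexp
  have hε2 : ε ^ 2 = 1 := by rcases hε with rfl | rfl <;> norm_num
  set μ := kg ^ 2 - ε * kn ^ 2 + ε * τg ^ 2 with hμdef
  have hA3 : A * (A * A) = μ • A := by
    subst hA
    ext i j
    fin_cases i <;> fin_cases j <;>
      · simp [Matrix.mul_apply, Fin.sum_univ_succ, hμdef]
        try ring_nf
        try simp [hε2]
        try ring_nf
  have htr : (A * A).trace = 2 * μ := by
    subst hA
    simp [Matrix.trace_fin_three, Matrix.mul_apply, Fin.sum_univ_succ, hμdef]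
    ring
  have htrA : A.trace = 0 := by
    subst hA; simp [Matrix.trace_fin_three]
  clear hA
  rcases eq_or_lt_of_le hμ with h0 | hpos
  · -- μ = 0 : nilpotent case
    have hp3 : A ^ 3 = A * (A * A) := by rw [pow_succ, pow_two, mul_assoc]
    have hA3' : (ω • A) ^ 3 = 0 := by
      rw [smul_pow, hp3, hA3, ← h0, zero_smul, smul_zero]
    have hexp' := exp_nilp3 hA3'
    rw [hexp] at hexp'
    have hz : (ω • A) + (2⁻¹ : ℝ) • (ω • A) ^ 2 = 0 := by
      have := hexp'.symm
      rw [add_assoc] at this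
      nth_rewrite 2 [← add_zero (1 : Matrix (Fin 3) (Fin 3) ℝ)] at this
      exact add_left_cancel this
    have hsq : (ω • A) ^ 2 = 0 := by
      have h2 := congrArg (· * (ω • A)) hz
      simp only [add_mul, smul_mul_assoc, zero_mul, ← pow_succ, ← pow_two] at h2
      rw [hA3', smul_zero, add_zero] at h2
      exact h2
    rw [hsq, smul_zero, add_zero] at hz
    exact hAne (by simpa [smul_eq_zero, hω.ne'] using hz)
  · -- μ > 0 : real eigenvalue case
    set s := Real.sqrt μ with hs
    have hspos : 0 < s := Real.sqrt_pos.mpr hpos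
    have hss : s * s = μ := Real.mul_self_sqrt hpos.le
    set M := A * A + s • A with hM
    have hMne : M ≠ 0 := by
      intro h
      have : M.trace = 0 := by rw [h]; simp
      rw [hM, Matrix.trace_add, htr, Matrix.trace_smul, htrA, smul_zero, add_zero] at this
      linarith
    have hAM : A * M = s • M := by
      rw [hM, mul_add, mul_smul_comm, hA3, smul_add, smul_smul, hss]
      abel
    -- find v with M.mulVec v ≠ 0
    obtain ⟨i, j, hij⟩ : ∃ i j, M i j ≠ 0 := by
      by_contra hcon
      push_neg at hcon
      exact hMne (by ext i j; simpa using hcon i j)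
    set w := M.mulVec (Pi.single j 1) with hw
    have hwne : w ≠ 0 := by
      intro h
      have := congrFun h i
      simp [hw, Matrix.mulVec_single] at this
      exact hij this
    have hAw : A.mulVec w = s • w := by
      rw [hw, Matrix.mulVec_mulVec, hAM, Matrix.smul_mulVec]
    have hBw : (ω • A).mulVec w = (ω * s) • w := by
      rw [Matrix.smul_mulVec, hAw, smul_smul]
    have := exp_mulVec_eigen hBw
    rw [hexp, Matrix.one_mulVec] at this
    obtain ⟨i₀, hi₀⟩ := Function.ne_iff.mp hwne
    have hcomp : Real.exp (ω * s) * w i₀ = w i₀ := by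
      have := congrFun this i₀
      simpa using this.symm
    have h5 : (Real.exp (ω * s) - 1) * w i₀ = 0 := by linear_combination hcomp
    rcases mul_eq_zero.mp h5 with h | h
    · have h6 := Real.add_one_le_exp (ω * s)
      nlinarith [mul_pos hω hspos]
    · exact hi₀ (by simpa using h)
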